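/- Consider Moser's Hamiltonian H : ℂ² → ℝ, H(z₁, z₂) = ½(|z₁|² − |z₂|²) + (|z₁|² + |z₂|²)·Re(z₁z₂), with Hamiltonian system ż₁ = −i z₁ − 2i z₁ Re(z₁z₂) − i(|z₁|² + |z₂|²) z̄₂ and ż₂ = i z₂ − 2i z₂ Re(z₁z₂) − i(|z₁|² + |z₂|²) z̄₁. Then every periodic solution of this system is constant, even though the linearized system at the origin, ż₁ = −i z₁, ż₂ = i z₂, has purely imaginary eigenvalues ±i and hence all of its nonzero solutions are nonconstant periodic orbits of period 2π. -/

import Mathlib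

open Complex

/-- Key algebraic identity: the imaginary part of `d/dt (z₁ z₂)` along Moser's flow
equals `-(4 Re(z₁z₂)² + (|z₁|²+|z₂|²)²)`. -/
private lemma moser_key (a b : ℂ) :
    ((-I * a - 2 * I * a * (((a * b).re : ℝ) : ℂ)
        - I * (((‖a‖ ^ 2 + ‖b‖ ^ 2 : ℝ)) : ℂ) * (starRingEnd ℂ) b) * b
      + a * (I * b - 2 * I * b * (((a * b).re : ℝ) : ℂ)
        - I * (((‖a‖ ^ 2 + ‖b‖ ^ 2 : ℝ)) : ℂ) * (starRingEnd ℂ) a)).im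
    = -(4 * ((a * b).re) ^ 2 + (‖a‖ ^ 2 + ‖b‖ ^ 2) ^ 2) := by
  simp only [Complex.sq_norm, Complex.normSq_apply, Complex.mul_im,
    Complex.mul_re, Complex.add_im, Complex.add_re, Complex.sub_im, Complex.sub_re,
    Complex.neg_im, Complex.neg_re, Complex.I_re, Complex.I_im, Complex.ofReal_re,
    Complex.ofReal_im, Complex.conj_re, Complex.conj_im, Complex.ofReal_add,
    Complex.ofReal_pow, Complex.re_ofNat, Complex.im_ofNat]
  ring

private lemma hasDerivAt_cexp_I (t : ℝ) :
    HasDerivAt (fun s : ℝ => Complex.exp (I * s)) (I * Complex.exp (I * t)) t := by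
  have h1 : HasDerivAt (fun s : ℝ => I * (s : ℂ)) I t := by
    simpa using (Complex.ofRealCLM.hasDerivAt (x := t)).const_mul I
  simpa [mul_comm] using h1.cexp

/-- **Moser's example: an overtwisted critical point without nonconstant periodic
orbits.**  Every periodic solution of the Hamiltonian system of Moser's Hamiltonian
`H(z₁,z₂) = ½(|z₁|² - |z₂|²) + (|z₁|² + |z₂|²)·Re(z₁z₂)`, namely
`ż₁ = -i z₁ - 2i z₁ Re(z₁z₂) - i(|z₁|² + |z₂|²) z̄₂` and
`ż₂ =  i z₂ - 2i z₂ Re(z₁z₂) - i(|z₁|² + |z₂|²) z̄₁`,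
is constant — even though for the linearized system at the origin,
`ż₁ = -i z₁`, `ż₂ = i z₂`, every solution that is not identically zero is a
nonconstant periodic orbit of period `2π`. -/
theorem moser_example_no_nonconstant_periodic_orbits :
    (∀ z₁ z₂ : ℝ → ℂ,
      (∀ t : ℝ, HasDerivAt z₁
        (-Complex.I * z₁ t - 2 * Complex.I * z₁ t * (((z₁ t * z₂ t).re : ℝ) : ℂ)
          - Complex.I * (((‖z₁ t‖ ^ 2 + ‖z₂ t‖ ^ 2 : ℝ)) : ℂ) * (starRingEnd ℂ) (z₂ t)) t) →
      (∀ t : ℝ, HasDerivAt z₂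
        (Complex.I * z₂ t - 2 * Complex.I * z₂ t * (((z₁ t * z₂ t).re : ℝ) : ℂ)
          - Complex.I * (((‖z₁ t‖ ^ 2 + ‖z₂ t‖ ^ 2 : ℝ)) : ℂ) * (starRingEnd ℂ) (z₁ t)) t) →
      ∀ T : ℝ, 0 < T → (∀ t : ℝ, z₁ (t + T) = z₁ t ∧ z₂ (t + T) = z₂ t) →
      ∃ c₁ c₂ : ℂ, ∀ t : ℝ, z₁ t = c₁ ∧ z₂ t = c₂) ∧
    (∀ w₁ w₂ : ℝ → ℂ,
      (∀ t : ℝ, HasDerivAt w₁ (-Complex.I * w₁ t) t) →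
      (∀ t : ℝ, HasDerivAt w₂ (Complex.I * w₂ t) t) →
      (w₁ 0, w₂ 0) ≠ ((0 : ℂ), (0 : ℂ)) →
      (∀ t : ℝ, w₁ (t + 2 * Real.pi) = w₁ t ∧ w₂ (t + 2 * Real.pi) = w₂ t) ∧
      ¬ ∃ c₁ c₂ : ℂ, ∀ t : ℝ, w₁ t = c₁ ∧ w₂ t = c₂) := by
  constructor
  · -- Nonlinear system: every periodic orbit is constant (in fact identically 0).
    intro z₁ z₂ h1 h2 T hT hper
    set b : ℝ → ℝ := fun t => (z₁ t * z₂ t).im with hbdef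
    have hb : ∀ t : ℝ, HasDerivAt b
        (-(4 * ((z₁ t * z₂ t).re) ^ 2 + (‖z₁ t‖ ^ 2 + ‖z₂ t‖ ^ 2) ^ 2)) t := by
      intro t
      have hmul := (h1 t).mul (h2 t)
      have him := Complex.imCLM.hasFDerivAt.comp_hasDerivAt t hmul
      rw [← moser_key (z₁ t) (z₂ t)]
      exact him
    have hdiff : Differentiable ℝ b := fun t => (hb t).differentiableAt
    have hanti : Antitone b := by
      refine antitone_of_deriv_nonpos hdiff fun t => ?_
      rw [(hb t).deriv]
      have := sq_nonneg ((z₁ t * z₂ t).re)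
      have := sq_nonneg (‖z₁ t‖ ^ 2 + ‖z₂ t‖ ^ 2)
      linarith
    have hbper : Function.Periodic b T := fun t => by
      simp only [hbdef, (hper t).1, (hper t).2]
    have hconst : ∀ s t : ℝ, s ≤ t → b s = b t := by
      intro s t hst
      obtain ⟨n, hn⟩ := exists_nat_ge ((t - s) / T)
      have htle : t ≤ s + n * T := by
        have := (div_le_iff₀ hT).mp hn
        linarith
      have h₁ : b (s + n * T) = b s := (hbper.nat_mul n) s
      have h₂ : b (s + n * T) ≤ b t := hanti htle
      have h₃ : b t ≤ b s := hanti hst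
      linarith
    have hzero : ∀ t : ℝ, z₁ t = 0 ∧ z₂ t = 0 := by
      intro t
      have hbc : b = fun _ => b 0 := by
        funext s
        rcases le_total s 0 with h | h
        · exact hconst s 0 h
        · exact (hconst 0 s h).symm
      have h0 : HasDerivAt b 0 t := by
        rw [hbc]; exact hasDerivAt_const t (b 0)
      have heq := (hb t).unique h0
      have hN : ‖z₁ t‖ ^ 2 + ‖z₂ t‖ ^ 2 = 0 := by
        nlinarith [sq_nonneg ((z₁ t * z₂ t).re), sq_nonneg (‖z₁ t‖ ^ 2 + ‖z₂ t‖ ^ 2),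
          norm_nonneg (z₁ t), norm_nonneg (z₂ t), sq_nonneg ‖z₁ t‖, sq_nonneg ‖z₂ t‖]
      have h1' : ‖z₁ t‖ = 0 := by
        nlinarith [norm_nonneg (z₁ t), norm_nonneg (z₂ t), sq_nonneg ‖z₂ t‖]
      have h2' : ‖z₂ t‖ = 0 := by
        nlinarith [norm_nonneg (z₁ t), norm_nonneg (z₂ t), sq_nonneg ‖z₁ t‖]
      exact ⟨norm_eq_zero.mp h1', norm_eq_zero.mp h2'⟩
    exact ⟨0, 0, hzero⟩
  · -- Linearized system.
    intro w₁ w₂ h1 h2 hne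
    have hg₁ : ∀ t : ℝ, w₁ t * Complex.exp (I * t) = w₁ 0 := by
      have hd : ∀ t : ℝ, HasDerivAt (fun s => w₁ s * Complex.exp (I * s)) 0 t := by
        intro t
        have := (h1 t).mul (hasDerivAt_cexp_I t)
        convert this using 1
        · rfl
        · rfl
        · ring
      have hdiff : Differentiable ℝ (fun s => w₁ s * Complex.exp (I * s)) :=
        fun t => (hd t).differentiableAt
      intro t
      have := is_const_of_deriv_eq_zero hdiff (fun t => (hd t).deriv) t 0
      simpa using this
    have hg₂ : ∀ t : ℝ, w₂ t * Complex.exp (-(I * t)) = w₂ 0 := by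
      have hd : ∀ t : ℝ, HasDerivAt (fun s => w₂ s * Complex.exp (-(I * s))) 0 t := by
        intro t
        have hexp : HasDerivAt (fun s : ℝ => Complex.exp (-(I * s)))
            (-(I * Complex.exp (-(I * t)))) t := by
          have h1' : HasDerivAt (fun s : ℝ => -(I * (s : ℂ))) (-I) t := by
            simpa [Pi.neg_def] using ((Complex.ofRealCLM.hasDerivAt (x := t)).const_mul I).neg
          have := h1'.cexp
          convert this using 1
          ring
        have := (h2 t).mul hexp
        convert this using 1
        · rfl
        · rfl
        · ring
      have hdiff : Differentiable ℝ (fun s => w₂ s * Complex.exp (-(I * s))) :=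
        fun t => (hd t).differentiableAt
      intro t
      have := is_const_of_deriv_eq_zero hdiff (fun t => (hd t).deriv) t 0
      simpa using this
    constructor
    · intro t
      have hexpper : Complex.exp (I * ((t + 2 * Real.pi : ℝ) : ℂ)) = Complex.exp (I * t) := by
        push_cast
        rw [show I * ((t : ℂ) + 2 * Real.pi) = I * t + 2 * Real.pi * I by ring,
          Complex.exp_add, Complex.exp_two_pi_mul_I, mul_one]
      constructor
      · have e1 := hg₁ (t + 2 * Real.pi)
        have e2 := hg₁ t
        rw [hexpper] at e1
        exact mul_right_cancel₀ (Complex.exp_ne_zero _) (e1.trans e2.symm)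
      · have e1 := hg₂ (t + 2 * Real.pi)
        have e2 := hg₂ t
        rw [show -(I * ((t + 2 * Real.pi : ℝ) : ℂ)) = -(I * t) + (-(2 * Real.pi * I)) by
          push_cast; ring, Complex.exp_add] at e1
        rw [show Complex.exp (-(2 * Real.pi * I)) = 1 by
          rw [Complex.exp_neg, Complex.exp_two_pi_mul_I, inv_one], mul_one] at e1
        exact mul_right_cancel₀ (Complex.exp_ne_zero _) (e1.trans e2.symm)
    · rintro ⟨c₁, c₂, hc⟩
      have hw₁ : ∀ t : ℝ, w₁ t = 0 := by
        intro t
        have hcf : w₁ = fun _ => c₁ := funext fun s => (hc s).1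
        have h0 : HasDerivAt w₁ 0 t := by rw [hcf]; exact hasDerivAt_const t c₁
        have := (h1 t).unique h0
        rcases mul_eq_zero.mp this with h | h
        · exact absurd (neg_eq_zero.mp h) Complex.I_ne_zero
        · exact h
      have hw₂ : ∀ t : ℝ, w₂ t = 0 := by
        intro t
        have hcf : w₂ = fun _ => c₂ := funext fun s => (hc s).2
        have h0 : HasDerivAt w₂ 0 t := by rw [hcf]; exact hasDerivAt_const t c₂
        have := (h2 t).unique h0
        rcases mul_eq_zero.mp this with h | h
        · exact absurd h Complex.I_ne_zero
        · exact h
      exact hne (by simp [hw₁ 0, hw₂ 0])
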